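/- Let h be a symmetric 4×4 real matrix (viewed as a self-adjoint operator on ℝ⁴) of the form h e₁ = ρe₁ + κe₃ + λe₄, h e₂ = ρe₂ + μe₃ + νe₄, h e₃ = κe₁ + μe₂ + σe₃, h e₄ = λe₁ + νe₂ + σe₄ with respect to an orthonormal basis {e₁,e₂,e₃,e₄}. If h has at most two distinct eigenvalues, each of multiplicity 2, then ν = κ and μ = −λ, or ν = −κ and μ = λ. -/

import Mathlib

open Polynomial

set_option maxHeartbeats 4000000

/-- A symmetric 4×4 matrix of the special shape, whose characteristic polynomial has at most
two distinct roots each of algebraic multiplicity 2, satisfies `ν = κ ∧ μ = -λ` or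
`ν = -κ ∧ μ = λ`. -/
theorem shape_operator_two_eigenvalues (ρ σ κ lam μ ν : ℝ)
    (h : Matrix (Fin 4) (Fin 4) ℝ)
    (hdef : h = !![ρ, 0, κ, lam; 0, ρ, μ, ν; κ, μ, σ, 0; lam, ν, 0, σ])
    (heig : ∃ a b : ℝ, h.charpoly = (X - C a)^2 * (X - C b)^2) :
    (ν = κ ∧ μ = -lam) ∨ (ν = -κ ∧ μ = lam) := by
  obtain ⟨a, b, hab⟩ := heig
  have hcp : h.charpoly =
      X^4 - C (2*(ρ+σ)) * X^3 + C ((ρ+σ)^2 + 2*(ρ*σ) - (κ^2+lam^2+μ^2+ν^2)) * X^2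
      + C (-2*(ρ+σ)*(ρ*σ) + (κ^2+lam^2+μ^2+ν^2)*(ρ+σ)) * X
      + C ((ρ*σ)^2 - (κ^2+lam^2+μ^2+ν^2)*(ρ*σ) + (κ*ν - lam*μ)^2) := by
    rw [hdef, Matrix.charpoly]
    simp [Matrix.charmatrix_apply, Matrix.det_succ_row_zero, Fin.sum_univ_succ,
      Matrix.diagonal_apply, Fin.succ_ne_zero,
      Fin.succAbove, Fin.castSucc, Fin.castAdd, Fin.castLE]
    simp only [_root_.map_add, _root_.map_mul, map_sub, map_neg, map_pow, map_ofNat,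
      _root_.map_one]
    ring
  have hexp : (X - C a)^2 * (X - C b)^2 =
      X^4 - C (2*a+2*b) * X^3 + C (a^2+4*(a*b)+b^2) * X^2
      - C (2*(a^2*b)+2*(a*b^2)) * X + C ((a*b)^2) := by
    simp only [_root_.map_add, _root_.map_mul, map_pow, map_ofNat]
    ring
  rw [hcp, hexp] at hab
  have e3 := congrArg (fun p => coeff p 3) hab
  have e2 := congrArg (fun p => coeff p 2) hab
  have e0 := congrArg (fun p => coeff p 0) hab
  simp only [coeff_add, coeff_sub, coeff_neg, coeff_C_mul, coeff_X_pow, coeff_C,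
    coeff_mul_X] at e3 e2 e0
  norm_num at e3 e2 e0
  set T := κ^2+lam^2+μ^2+ν^2 with hT
  have hsum : a + b = ρ + σ := by linarith
  have hprod : a*b = ρ*σ - T/2 := by
    linear_combination (-1/2)*e2 - (1/2)*(a+b+ρ+σ)*hsum
  have key : T^2 = 4*(κ*ν - lam*μ)^2 := by
    linear_combination -4*e0 + 2*(T - 2*(ρ*σ) - 2*(a*b))*hprod
  have hTnn : 0 ≤ T := by positivity
  by_cases hc : 0 ≤ κ*ν - lam*μ
  · left
    have h1 : (κ-ν)^2 + (lam+μ)^2 = 0 := by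
      nlinarith [sq_nonneg (κ-ν), sq_nonneg (lam+μ), sq_nonneg (κ+ν), sq_nonneg (lam-μ)]
    constructor <;> nlinarith [sq_nonneg (κ-ν), sq_nonneg (lam+μ), h1]
  · right
    have h1 : (κ+ν)^2 + (lam-μ)^2 = 0 := by
      nlinarith [sq_nonneg (κ-ν), sq_nonneg (lam+μ), sq_nonneg (κ+ν), sq_nonneg (lam-μ)]
    constructor <;> nlinarith [sq_nonneg (κ+ν), sq_nonneg (lam-μ), h1]
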